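/- arXiv:2310.12972 — 3 statements merged into one kernel-verified Lean document; each statement's English description precedes it below -/
import Mathlib

section
/- Let S and A be real normed vector spaces, let f : S × A → S be the ground-truth one-step residual dynamics and f̂ : S × A → S a learned approximation. Fix an expert transition (s*, a*, s*₊) with s*₊ = s* + f(s*, a*), an action perturbation Δ ∈ A, and a candidate state s^G ∈ S. Suppose: (i) f is K_S-Lipschitz in the state argument with action a* on a set U_S ⊆ S containing both s^G and s*, i.e. ‖f(s₁, a*) − f(s₂, a*)‖ ≤ K_S‖s₁ − s₂‖ for s₁, s₂ ∈ U_S; (ii) f is K_A-Lipschitz in the action argument at state s^G on a set U_A ⊆ A containing both a* and a* + Δ, i.e. ‖f(s^G, a₁) − f(s^G, a₂)‖ ≤ K_A‖a₁ − a₂‖ for a₁, a₂ ∈ U_A; (iii) the root-finding residual is ε_opt := s*₊ − f̂(s^G, a* + Δ) − s^G ∈ S. Then ‖f(s^G, a* + Δ) − f̂(s^G, a* + Δ)‖ ≤ K_A‖Δ‖ + (1 + K_S)‖s^G − s*‖ + ‖ε_opt‖. -/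
theorem disturbed_action_label_quality
    {S A : Type*} [NormedAddCommGroup S] [NormedSpace ℝ S]
    [NormedAddCommGroup A] [NormedSpace ℝ A]
    (f fhat : S × A → S)
    (sStar sPlus sG : S) (aStar Δ : A)
    (K_S K_A : ℝ) (εopt : S)
    (hTrans : sPlus = sStar + f (sStar, aStar))
    (US : Set S) (hG_S : sG ∈ US) (hS_S : sStar ∈ US)
    (hLipS : ∀ s₁ ∈ US, ∀ s₂ ∈ US,
      ‖f (s₁, aStar) - f (s₂, aStar)‖ ≤ K_S * ‖s₁ - s₂‖)
    (UA : Set A) (hA : aStar ∈ UA) (hAΔ : aStar + Δ ∈ UA)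
    (hLipA : ∀ a₁ ∈ UA, ∀ a₂ ∈ UA,
      ‖f (sG, a₁) - f (sG, a₂)‖ ≤ K_A * ‖a₁ - a₂‖)
    (hOpt : εopt = sPlus - fhat (sG, aStar + Δ) - sG) :
    ‖f (sG, aStar + Δ) - fhat (sG, aStar + Δ)‖ ≤
      K_A * ‖Δ‖ + (1 + K_S) * ‖sG - sStar‖ + ‖εopt‖ := by
  have h1 := hLipA (aStar + Δ) hAΔ aStar hA
  have h2 := hLipS sG hG_S sStar hS_S
  have hfhat : fhat (sG, aStar + Δ) = f (sStar, aStar) + (sStar - sG - εopt) := by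
    rw [hOpt, hTrans]; abel
  have key : f (sG, aStar + Δ) - fhat (sG, aStar + Δ)
      = (f (sG, aStar + Δ) - f (sG, aStar)) + (f (sG, aStar) - f (sStar, aStar))
        + ((sG - sStar) + εopt) := by
    rw [hfhat]; abel
  rw [key]
  have hΔ : aStar + Δ - aStar = Δ := by abel
  calc ‖(f (sG, aStar + Δ) - f (sG, aStar)) + (f (sG, aStar) - f (sStar, aStar))
        + ((sG - sStar) + εopt)‖
      ≤ ‖f (sG, aStar + Δ) - f (sG, aStar)‖ + ‖f (sG, aStar) - f (sStar, aStar)‖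
        + (‖sG - sStar‖ + ‖εopt‖) := by
        refine (norm_add_le _ _).trans ?_
        gcongr <;> exact norm_add_le _ _
    _ ≤ K_A * ‖Δ‖ + K_S * ‖sG - sStar‖ + (‖sG - sStar‖ + ‖εopt‖) := by
        rw [hΔ] at h1; gcongr
    _ = K_A * ‖Δ‖ + (1 + K_S) * ‖sG - sStar‖ + ‖εopt‖ := by ring
end

section
/- Let S and A be real normed vector spaces, let f : S × A → S be the ground-truth one-step residual dynamics and f̂ : S × A → S a learned approximation. Fix an expert data point (s*, a*) ∈ S × A and a state s^G ∈ S that exactly solves the BackTrack root-finding equation, i.e. s^G + f̂(s^G, a*) = s*. Suppose: (i) ‖f(s*, a*) − f̂(s*, a*)‖ ≤ ε; (ii) f̂ is K₁-Lipschitz in the state argument with action a* on a set Û ⊆ S containing s^G and s*; (iii) f is K₂-Lipschitz in the state argument with action a* on a set U ⊆ S containing s^G and s*. Then the generated label (s^G, a*, s*) is corrective with respect to the true dynamics with error bound ‖s^G + f(s^G, a*) − s*‖ ≤ ε + (K₁ + K₂)‖s^G − s*‖. -/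
theorem backtrack_label_corrective
    {S A : Type*} [NormedAddCommGroup S] [NormedSpace ℝ S]
    [NormedAddCommGroup A] [NormedSpace ℝ A]
    (f fhat : S × A → S)
    (sStar sG : S) (aStar : A)
    (ε K₁ K₂ : ℝ)
    (hRoot : sG + fhat (sG, aStar) = sStar)
    (hε : ‖f (sStar, aStar) - fhat (sStar, aStar)‖ ≤ ε)
    (Uhat : Set S) (hG_hat : sG ∈ Uhat) (hS_hat : sStar ∈ Uhat)
    (hLip_hat : ∀ s₁ ∈ Uhat, ∀ s₂ ∈ Uhat,
      ‖fhat (s₁, aStar) - fhat (s₂, aStar)‖ ≤ K₁ * ‖s₁ - s₂‖)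
    (U : Set S) (hG : sG ∈ U) (hS : sStar ∈ U)
    (hLip : ∀ s₁ ∈ U, ∀ s₂ ∈ U,
      ‖f (s₁, aStar) - f (s₂, aStar)‖ ≤ K₂ * ‖s₁ - s₂‖) :
    ‖sG + f (sG, aStar) - sStar‖ ≤ ε + (K₁ + K₂) * ‖sG - sStar‖ := by
  have key : sG + f (sG, aStar) - sStar =
      (f (sG, aStar) - f (sStar, aStar)) + (f (sStar, aStar) - fhat (sStar, aStar))
        + (fhat (sStar, aStar) - fhat (sG, aStar)) := by
    rw [← hRoot]; abel
  rw [key]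
  calc ‖(f (sG, aStar) - f (sStar, aStar)) + (f (sStar, aStar) - fhat (sStar, aStar))
        + (fhat (sStar, aStar) - fhat (sG, aStar))‖
      ≤ ‖f (sG, aStar) - f (sStar, aStar)‖ + ‖f (sStar, aStar) - fhat (sStar, aStar)‖
        + ‖fhat (sStar, aStar) - fhat (sG, aStar)‖ := norm_add₃_le
    _ ≤ K₂ * ‖sG - sStar‖ + ε + K₁ * ‖sStar - sG‖ := by
        gcongr
        · exact hLip _ hG _ hS
        · exact hLip_hat _ hS_hat _ hG_hat
    _ = ε + (K₁ + K₂) * ‖sG - sStar‖ := by rw [norm_sub_rev sStar]; ring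
end

section
/- Let S and A be real normed vector spaces, let f : S × A → S be the ground-truth one-step residual dynamics and f̂ : S × A → S a learned approximation. Fix an expert transition (s*, a*, s*₊) with s*₊ = s* + f(s*, a*), an action perturbation Δ ∈ A, and a state s^G ∈ S that exactly solves the DisturbedAction root-finding equation, i.e. s^G + f̂(s^G, a* + Δ) = s*₊. Suppose: (i) f is K_S-Lipschitz in the state argument with action a* on a set U_S ⊆ S containing s^G and s*; (ii) f is K_A-Lipschitz in the action argument at state s^G on a set U_A ⊆ A containing a* and a* + Δ. Then the generated label (s^G, a* + Δ, s*₊) is corrective with respect to the true dynamics with error bound ‖s^G + f(s^G, a* + Δ) − s*₊‖ ≤ K_A‖Δ‖ + (1 + K_S)‖s^G − s*‖. -/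
theorem disturbed_action_label_corrective
    {S A : Type*} [NormedAddCommGroup S] [NormedSpace ℝ S]
    [NormedAddCommGroup A] [NormedSpace ℝ A]
    (f fhat : S × A → S)
    (sStar sPlus sG : S) (aStar Δ : A)
    (K_S K_A : ℝ)
    (hTrans : sPlus = sStar + f (sStar, aStar))
    (hRoot : sG + fhat (sG, aStar + Δ) = sPlus)
    (US : Set S) (hG_S : sG ∈ US) (hS_S : sStar ∈ US)
    (hLipS : ∀ s₁ ∈ US, ∀ s₂ ∈ US,
      ‖f (s₁, aStar) - f (s₂, aStar)‖ ≤ K_S * ‖s₁ - s₂‖)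
    (UA : Set A) (hA : aStar ∈ UA) (hAΔ : aStar + Δ ∈ UA)
    (hLipA : ∀ a₁ ∈ UA, ∀ a₂ ∈ UA,
      ‖f (sG, a₁) - f (sG, a₂)‖ ≤ K_A * ‖a₁ - a₂‖) :
    ‖sG + f (sG, aStar + Δ) - sPlus‖ ≤
      K_A * ‖Δ‖ + (1 + K_S) * ‖sG - sStar‖ := by
  have h1 := hLipA (aStar + Δ) hAΔ aStar hA
  have h2 := hLipS sG hG_S sStar hS_S
  rw [add_sub_cancel_left] at h1
  have key : sG + f (sG, aStar + Δ) - sPlus =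
      (f (sG, aStar + Δ) - f (sG, aStar)) + (f (sG, aStar) - f (sStar, aStar))
        + (sG - sStar) := by
    rw [hTrans]; abel
  calc ‖sG + f (sG, aStar + Δ) - sPlus‖
      ≤ ‖f (sG, aStar + Δ) - f (sG, aStar)‖ + ‖f (sG, aStar) - f (sStar, aStar)‖
        + ‖sG - sStar‖ := by rw [key]; exact norm_add₃_le
    _ ≤ K_A * ‖Δ‖ + K_S * ‖sG - sStar‖ + ‖sG - sStar‖ := by
        gcongr
    _ = K_A * ‖Δ‖ + (1 + K_S) * ‖sG - sStar‖ := by ring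
end
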